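/- Let A be a unital algebra over ℂ, M a unital A-bimodule, and m, n positive integers with m ≠ n. If δ : A → M is an additive map with δ(1) = 0 such that (m+n)·δ(XY+YX) = 2m·δ(X)·Y + 2m·δ(Y)·X + 2n·X·δ(Y) + 2n·Y·δ(X) whenever XY = YX = 0, then δ(P) = 0 for every idempotent P in A. -/
import Mathlib


open MulOpposite

/-- Cancellation in a complex vector space: if `j • x = k • x` for distinct
naturals `j`, `k`, then `x = 0`. -/
lemma nsmul_cancel_of_ne {M : Type*} [AddCommGroup M] [Module ℂ M]
    (j k : ℕ) (hjk : j ≠ k) (x : M) (h : j • x = k • x) : x = 0 := by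
  have h' : ((j : ℂ) - (k : ℂ)) • x = 0 := by
    rw [sub_smul, Nat.cast_smul_eq_nsmul, Nat.cast_smul_eq_nsmul, h, sub_self]
  rcases smul_eq_zero.mp h' with h'' | h''
  · exact absurd (Nat.cast_inj.mp (sub_eq_zero.mp h'')) hjk
  · exact h''

/-- Acting by a ring element on a linear relation between natural multiples. -/
lemma act_on_rel {R M : Type*} [Monoid R] [AddCommGroup M] [DistribMulAction R M]
    (r : R) (j k l : ℕ) (x y z : M) (h : j • x = k • y + l • z) :
    j • (r • x) = k • (r • y) + l • (r • z) := by
  calc j • (r • x) = r • (j • x) := (smul_comm _ _ _)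
    _ = r • (k • y + l • z) := by rw [h]
    _ = k • (r • y) + l • (r • z) := by
        rw [smul_add, smul_comm r k y, smul_comm r l z]

/-- An `(m,n)`-Jordan derivable mapping at zero with `δ 1 = 0`
vanishes on idempotents. -/
theorem mn_jordan_derivable_at_zero_idempotent
    {A M : Type*} [Ring A] [Algebra ℂ A]
    [AddCommGroup M] [Module ℂ M] [Module A M] [Module Aᵐᵒᵖ M]
    [SMulCommClass A Aᵐᵒᵖ M]
    (m n : ℕ) (hm : 0 < m) (hn : 0 < n) (hmn : m ≠ n)
    (δ : A → M) (hadd : ∀ a b : A, δ (a + b) = δ a + δ b)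
    (hδ1 : δ 1 = 0)
    (hzero : ∀ X Y : A, X * Y = 0 → Y * X = 0 →
      (m + n) • δ (X * Y + Y * X) =
        (2 * m) • (op Y • δ X) + (2 * m) • (op X • δ Y)
          + (2 * n) • (X • δ Y) + (2 * n) • (Y • δ X))
    (P : A) (hP : P * P = P) :
    δ P = 0 := by
  -- δ 0 = 0
  have h0 : δ 0 = 0 := by
    have h := hadd 0 0
    rw [add_zero] at h
    exact (left_eq_add.mp h)
  -- δ (1 - P) = - δ P
  have hQ : δ (1 - P) = -δ P := by
    have h := hadd P (1 - P)
    rw [show P + (1 - P) = 1 by abel, hδ1] at h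
    rw [eq_neg_iff_add_eq_zero, add_comm]
    exact h.symm
  -- the two orthogonality conditions
  have h1 : P * (1 - P) = 0 := by rw [mul_sub, mul_one, hP, sub_self]
  have h2 : (1 - P) * P = 0 := by rw [sub_mul, one_mul, hP, sub_self]
  have key := hzero P (1 - P) h1 h2
  rw [h1, h2, add_zero, h0, smul_zero, hQ] at key
  -- idempotent-action identities
  have hPP : P • P • δ P = P • δ P := by rw [smul_smul, hP]
  have hcomm : P • op P • δ P = op P • P • δ P := smul_comm _ _ _
  have hOO : ∀ x : M, op P • op P • x = op P • x := fun x => by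
    rw [smul_smul, ← op_mul, hP]
  -- the main relation:  (2m+2n) • δP = 4m • (opP • δP) + 4n • (P • δP)
  have eq1 : (2 * m + 2 * n) • δ P
      = (4 * m) • (op P • δ P) + (4 * n) • (P • δ P) := by
    have e1 : op (1 - P) • δ P = δ P - op P • δ P := by
      rw [op_sub, op_one, sub_smul, one_smul]
    have e2 : (1 - P) • δ P = δ P - P • δ P := by
      rw [sub_smul, one_smul]
    simp only [e1, e2, smul_neg, smul_sub] at key
    have key' := key.symm
    rw [add_nsmul, show 4 * m = 2 * m + 2 * m from by ring,
        show 4 * n = 2 * n + 2 * n from by ring, add_nsmul, add_nsmul]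
    rw [← sub_eq_zero, ← key']
    abel
  -- act by P on eq1
  have eqa : (2 * m + 2 * n) • (P • δ P)
      = (4 * m) • (op P • P • δ P) + (4 * n) • (P • δ P) := by
    have h := act_on_rel P _ _ _ _ _ _ eq1
    rwa [hcomm, hPP] at h
  -- act by op P on eqa
  have eqc : (2 * m + 2 * n) • (op P • P • δ P)
      = (4 * m + 4 * n) • (op P • P • δ P) := by
    have h := act_on_rel (op P) _ _ _ _ _ _ eqa
    rw [hOO] at h
    exact h.trans (add_nsmul _ _ _).symm
  have hc0 : op P • P • δ P = 0 :=
    nsmul_cancel_of_ne _ _ (by omega) _ eqc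
  -- hence P • δ P = 0
  have ha0 : P • δ P = 0 := by
    rw [hc0, smul_zero, zero_add] at eqa
    exact nsmul_cancel_of_ne _ _ (by omega) _ eqa
  -- act by op P on eq1 to get op P • δ P = 0
  have hb0 : op P • δ P = 0 := by
    have h := act_on_rel (op P) _ _ _ _ _ _ eq1
    rw [hOO, hc0, smul_zero, add_zero] at h
    exact nsmul_cancel_of_ne _ _ (by omega) _ h
  -- conclude
  rw [hb0, ha0, smul_zero, smul_zero, add_zero] at eq1
  have h : (2 * m + 2 * n) • δ P = 0 • δ P := by rw [eq1, zero_smul]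
  exact nsmul_cancel_of_ne _ _ (by omega) _ h
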